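/- Let r = p₁/p₂ ∈ ℂ(y) where p₁, p₂ ∈ ℂ[y] are coprime polynomials with deg p₁ > deg p₂. If some nonconstant polynomial h ∈ ℂ[y] belongs to the subfield ℂ(r) of ℂ(y), then p₂ is a nonzero constant, i.e. r is (up to a constant factor) a polynomial. -/

import Mathlib

open Polynomial

noncomputable def hgp (f p₁ p₂ : Polynomial ℂ) (n : ℕ) : Polynomial ℂ :=
  ∑ i ∈ Finset.range (n+1), C (f.coeff i) * p₁^i * p₂^(n-i)

lemma aeval_div_eq (p₁ p₂ : Polynomial ℂ) (hp₂ : p₂ ≠ 0) (f : Polynomial ℂ) :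
    Polynomial.aeval (algebraMap (Polynomial ℂ) (RatFunc ℂ) p₁
        / algebraMap (Polynomial ℂ) (RatFunc ℂ) p₂) f
      = algebraMap (Polynomial ℂ) (RatFunc ℂ) (hgp f p₁ p₂ f.natDegree)
        / algebraMap (Polynomial ℂ) (RatFunc ℂ) p₂ ^ f.natDegree := by
  set φ := algebraMap (Polynomial ℂ) (RatFunc ℂ) with hφ
  have hφ2 : φ p₂ ≠ 0 := RatFunc.algebraMap_ne_zero hp₂
  rw [eq_div_iff (pow_ne_zero _ hφ2)]
  rw [Polynomial.aeval_eq_sum_range, hgp, map_sum, Finset.sum_mul]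
  apply Finset.sum_congr rfl
  intro i hi
  have hin : i ≤ f.natDegree := Nat.lt_succ_iff.mp (Finset.mem_range.mp hi)
  have hsplit : φ p₂ ^ f.natDegree = φ p₂ ^ i * φ p₂ ^ (f.natDegree - i) := by
    rw [← pow_add, Nat.add_sub_cancel' hin]
  rw [Algebra.smul_def, hsplit, div_pow, map_mul, map_mul, map_pow, map_pow]
  have hc : algebraMap ℂ (RatFunc ℂ) (f.coeff i) = φ (C (f.coeff i)) := by
    rw [IsScalarTower.algebraMap_apply ℂ (Polynomial ℂ) (RatFunc ℂ)]
    rfl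
  rw [hc]
  field_simp

lemma hgp_degree (f p₁ p₂ : Polynomial ℂ) (hf : f ≠ 0) (hp₂ : p₂ ≠ 0)
    (hd : p₂.natDegree < p₁.natDegree) :
    (hgp f p₁ p₂ f.natDegree).degree = (f.natDegree * p₁.natDegree : ℕ) := by
  set n := f.natDegree with hn
  have hp₁ : p₁ ≠ 0 := fun h => by simp [h] at hd
  have hlead : (C (f.coeff n) * p₁^n * p₂^(n-n)).degree = (n * p₁.natDegree : ℕ) := by
    rw [Nat.sub_self, pow_zero, mul_one, degree_C_mul (by simpa [hn] using Polynomial.leadingCoeff_ne_zero.mpr hf), degree_pow, Polynomial.degree_eq_natDegree hp₁]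
    simp [Nat.cast_mul, nsmul_eq_mul]
  have hrest : (∑ i ∈ Finset.range n, C (f.coeff i) * p₁^i * p₂^(n-i)).degree
      < (n * p₁.natDegree : ℕ) := by
    apply lt_of_le_of_lt (Polynomial.degree_sum_le _ _)
    rw [Finset.sup_lt_iff (by exact_mod_cast WithBot.bot_lt_coe _)]
    intro i hi
    have hilt : i < n := Finset.mem_range.mp hi
    have h1 : (C (f.coeff i) * p₁^i * p₂^(n-i)).natDegree
        ≤ i * p₁.natDegree + (n-i) * p₂.natDegree := by
      apply le_trans (natDegree_mul_le)
      have := natDegree_mul_le (p := C (f.coeff i)) (q := p₁^i)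
      simp only [natDegree_C, zero_add] at this ⊢
      gcongr
      · exact le_trans this (by simp [natDegree_pow])
      · simp [natDegree_pow]
    have h2 : i * p₁.natDegree + (n-i) * p₂.natDegree < n * p₁.natDegree := by
      have hni : 0 < n - i := Nat.sub_pos_of_lt hilt
      calc i * p₁.natDegree + (n-i) * p₂.natDegree
          < i * p₁.natDegree + (n-i) * p₁.natDegree := by
            exact Nat.add_lt_add_left (mul_lt_mul_of_pos_left hd hni) _
        _ = n * p₁.natDegree := by rw [← Nat.add_mul, Nat.add_sub_cancel' hilt.le]
    calc (C (f.coeff i) * p₁^i * p₂^(n-i)).degree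
        ≤ ((C (f.coeff i) * p₁^i * p₂^(n-i)).natDegree : WithBot ℕ) :=
          Polynomial.degree_le_natDegree
      _ < (n * p₁.natDegree : ℕ) := by exact_mod_cast lt_of_le_of_lt h1 h2
  rw [hgp, Finset.sum_range_succ]
  rw [Polynomial.degree_add_eq_right_of_degree_lt (by rw [hlead]; exact hrest), hlead]

lemma hgp_coprime (f p₁ p₂ : Polynomial ℂ) (hf : f ≠ 0) (hcop : IsCoprime p₁ p₂) :
    IsCoprime (hgp f p₁ p₂ f.natDegree) p₂ := by
  set n := f.natDegree with hn
  have hdvd : p₂ ∣ ∑ i ∈ Finset.range n, C (f.coeff i) * p₁^i * p₂^(n-i) := by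
    apply Finset.dvd_sum
    intro i hi
    have : 0 < n - i := Nat.sub_pos_of_lt (Finset.mem_range.mp hi)
    exact Dvd.dvd.mul_left (dvd_pow_self p₂ this.ne') _
  obtain ⟨b, hb⟩ := hdvd
  have : hgp f p₁ p₂ n = C (f.coeff n) * p₁^n + b * p₂ := by
    rw [hgp, Finset.sum_range_succ, hb, Nat.sub_self, pow_zero, mul_one]
    ring
  rw [this]
  apply IsCoprime.add_mul_right_left
  have hcn : IsCoprime (C (f.coeff n)) p₂ := by
    refine ⟨C (f.coeff n)⁻¹, 0, ?_⟩
    have : f.coeff n ≠ 0 := by simpa [hn] using Polynomial.leadingCoeff_ne_zero.mpr hf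
    simp [← Polynomial.C_mul, inv_mul_cancel₀ this]
  exact hcn.mul_left hcop.pow_left

/-- Let `r = p₁/p₂ ∈ ℂ(y)` where `p₁, p₂ ∈ ℂ[y]` are coprime polynomials with
`deg p₁ > deg p₂`.  If some nonconstant polynomial `h ∈ ℂ[y]` belongs to the subfield
`ℂ(r)` of `ℂ(y)` generated by `r` over `ℂ`, then `p₂` is a nonzero constant, i.e. `r`
is (up to a constant factor) a polynomial. -/
theorem polynomial_in_C_r_implies_r_polynomial (p₁ p₂ : Polynomial ℂ)
    (hcop : IsCoprime p₁ p₂) (hdeg : p₂.degree < p₁.degree)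
    (h : Polynomial ℂ) (hh : 0 < h.natDegree)
    (hmem : algebraMap (Polynomial ℂ) (RatFunc ℂ) h ∈
      IntermediateField.adjoin ℂ
        {algebraMap (Polynomial ℂ) (RatFunc ℂ) p₁ / algebraMap (Polynomial ℂ) (RatFunc ℂ) p₂}) :
    ∃ c : ℂ, c ≠ 0 ∧ p₂ = Polynomial.C c := by
  set φ := algebraMap (Polynomial ℂ) (RatFunc ℂ) with hφ
  have hinj : Function.Injective φ := RatFunc.algebraMap_injective ℂ
  have hhne0 : h ≠ 0 := fun h0 => by simp [h0] at hh
  by_cases hp₂ : p₂ = 0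
  · exfalso
    rw [hp₂] at hmem
    simp only [map_zero, div_zero] at hmem
    rw [IntermediateField.adjoin_zero, IntermediateField.mem_bot] at hmem
    obtain ⟨c, hc⟩ := hmem
    have hCc : φ (C c) = φ h := by
      rw [← hc, IsScalarTower.algebraMap_apply ℂ (Polynomial ℂ) (RatFunc ℂ)]
      rfl
    have := hinj hCc
    rw [← this] at hh
    simp at hh
  · have hp₁ : p₁ ≠ 0 := by
      intro h0
      rw [h0, Polynomial.degree_zero] at hdeg
      exact absurd hdeg (by simp)
    have hd : p₂.natDegree < p₁.natDegree := Polynomial.natDegree_lt_natDegree hp₂ hdeg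
    have hφ2 : φ p₂ ≠ 0 := RatFunc.algebraMap_ne_zero hp₂
    have hhne : φ h ≠ 0 := RatFunc.algebraMap_ne_zero hhne0
    rw [IntermediateField.mem_adjoin_simple_iff] at hmem
    obtain ⟨f, g, hfg⟩ := hmem
    rw [aeval_div_eq p₁ p₂ hp₂ f, aeval_div_eq p₁ p₂ hp₂ g] at hfg
    set F := hgp f p₁ p₂ f.natDegree with hF
    set G := hgp g p₁ p₂ g.natDegree with hG
    have hGne : G ≠ 0 := by
      intro h0
      rw [h0] at hfg
      simp at hfg
      exact hhne hfg
    have hFne : F ≠ 0 := by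
      intro h0
      rw [h0] at hfg
      simp at hfg
      exact hhne hfg
    have hfne : f ≠ 0 := by
      rintro rfl
      apply hFne
      simp [hF, hgp]
    have hgne : g ≠ 0 := by
      rintro rfl
      apply hGne
      simp [hG, hgp]
    have hFnat : F.natDegree = f.natDegree * p₁.natDegree :=
      Polynomial.natDegree_eq_of_degree_eq_some (hgp_degree f p₁ p₂ hfne hp₂ hd)
    have hGnat : G.natDegree = g.natDegree * p₁.natDegree :=
      Polynomial.natDegree_eq_of_degree_eq_some (hgp_degree g p₁ p₂ hgne hp₂ hd)
    have hφF : φ F ≠ 0 := RatFunc.algebraMap_ne_zero hFne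
    have hφG : φ G ≠ 0 := RatFunc.algebraMap_ne_zero hGne
    have key : h * G * p₂ ^ f.natDegree = F * p₂ ^ g.natDegree := by
      apply hinj
      rw [map_mul, map_mul, map_mul, map_pow, map_pow, hfg]
      rw [← hφ]
      field_simp
    have hdegeq : h.natDegree + g.natDegree * p₁.natDegree + f.natDegree * p₂.natDegree
        = f.natDegree * p₁.natDegree + g.natDegree * p₂.natDegree := by
      have hkey := congrArg Polynomial.natDegree key
      rw [Polynomial.natDegree_mul (mul_ne_zero hhne0 hGne) (pow_ne_zero _ hp₂),
        Polynomial.natDegree_mul hhne0 hGne,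
        Polynomial.natDegree_mul hFne (pow_ne_zero _ hp₂),
        Polynomial.natDegree_pow, Polynomial.natDegree_pow, hGnat, hFnat] at hkey
      omega
    have hmn : g.natDegree < f.natDegree := by
      by_contra hc
      push_neg at hc
      nlinarith [hdegeq, hd, hh, Nat.mul_le_mul hc hd.le]
    have hcancel : F = h * G * p₂ ^ (f.natDegree - g.natDegree) := by
      have hpow : p₂ ^ f.natDegree = p₂ ^ (f.natDegree - g.natDegree) * p₂ ^ g.natDegree := by
        rw [← pow_add, Nat.sub_add_cancel hmn.le]
      apply mul_right_cancel₀ (pow_ne_zero g.natDegree hp₂)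
      rw [← key, hpow]
      ring
    have hdvd : p₂ ∣ F := by
      rw [hcancel]
      exact Dvd.dvd.mul_left (dvd_pow_self p₂ (Nat.sub_pos_of_lt hmn).ne') _
    have hunit : IsUnit p₂ := (hgp_coprime f p₁ p₂ hfne hcop).symm.isUnit_of_dvd hdvd
    obtain ⟨c, hcu, hc⟩ := Polynomial.isUnit_iff.mp hunit
    exact ⟨c, hcu.ne_zero, hc.symm⟩
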